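/- Let X and Y be random variables with values in [0,1], with CDFs F_X and F_Y respectively, let c ≥ 0 and τ ∈ (0,1]. Suppose that for every t ∈ ℝ, F_Y(t) ≤ F_X(t) ≤ F_Y(t + c). Then: (1) for every b ∈ [0,1], 0 ≤ E[(b − X)⁺] − E[(b − Y)⁺] ≤ c; and (2) 0 ≤ CVaR_τ(Y) − CVaR_τ(X) ≤ τ⁻¹ c. -/

import Mathlib

open MeasureTheory

/-- Layer cake for `max (b - Z ω) 0`. -/
lemma layer_aux {Ω : Type*} [MeasurableSpace Ω] (μ : Measure Ω) [IsProbabilityMeasure μ]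
    (Z : Ω → ℝ) (hZmeas : Measurable Z) (hZ0 : ∀ ω, 0 ≤ Z ω)
    (b M : ℝ) (hb0 : 0 ≤ b) (hbM : b ≤ M) :
    ∫ ω, max (b - Z ω) 0 ∂μ
      = ∫ t in Set.Ioc 0 M, (μ {ω | Z ω ≤ b - t}).toReal := by
  have hmeas : Measurable fun ω => max (b - Z ω) 0 :=
    (measurable_const.sub hZmeas).max measurable_const
  have hbd : ∀ ω, max (b - Z ω) 0 ≤ M := fun ω =>
    max_le (by have := hZ0 ω; linarith) (by linarith)
  have hint : Integrable (fun ω => max (b - Z ω) 0) μ := by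
    refine Integrable.mono' (integrable_const M) hmeas.aestronglyMeasurable
      (Filter.Eventually.of_forall fun ω => ?_)
    rw [Real.norm_eq_abs, abs_of_nonneg (le_max_right _ _)]
    exact hbd ω
  rw [hint.integral_eq_integral_Ioc_meas_le (Filter.Eventually.of_forall fun ω => le_max_right _ _)
    (Filter.Eventually.of_forall hbd)]
  refine setIntegral_congr_fun measurableSet_Ioc fun t ht => ?_
  have hset : {a | t ≤ max (b - Z a) 0} = {ω | Z ω ≤ b - t} := by
    ext ω
    simp only [Set.mem_setOf_eq]
    constructor
    · intro h
      rcases max_cases (b - Z ω) 0 with ⟨he, _⟩ | ⟨he, _⟩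
      · rw [he] at h; linarith
      · rw [he] at h; exact absurd h (not_le.mpr ht.1)
    · intro h
      have h2 : t ≤ b - Z ω := by linarith
      exact h2.trans (le_max_left _ _)
  rw [hset]
  rfl

lemma cdf_intOn {Ω : Type*} [MeasurableSpace Ω] (μ : Measure Ω) [IsProbabilityMeasure μ]
    (Z : Ω → ℝ) (b M : ℝ) :
    IntegrableOn (fun t => (μ {ω | Z ω ≤ b - t}).toReal) (Set.Ioc 0 M) := by
  have hanti : Antitone fun t => (μ {ω | Z ω ≤ b - t}).toReal := by
    intro s t hst
    apply (ENNReal.toReal_le_toReal (measure_ne_top _ _) (measure_ne_top _ _)).mpr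
    apply measure_mono
    intro ω hω
    simp only [Set.mem_setOf_eq] at hω ⊢
    linarith
  refine Integrable.mono' (integrableOn_const_iff (C := (1:ℝ)) |>.mpr (Or.inr measure_Ioc_lt_top))
    hanti.measurable.aestronglyMeasurable.restrict
    (Filter.Eventually.of_forall fun t => ?_)
  rw [Real.norm_eq_abs, abs_of_nonneg ENNReal.toReal_nonneg]
  exact ENNReal.toReal_le_of_le_ofReal zero_le_one (by simpa using prob_le_one)

theorem cdf_sandwich_cvar {Ω : Type*} [MeasurableSpace Ω]
    (μ : Measure Ω) [IsProbabilityMeasure μ]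
    (X Y : Ω → ℝ) (hXmeas : Measurable X) (hYmeas : Measurable Y)
    (hX01 : ∀ ω, X ω ∈ Set.Icc (0:ℝ) 1) (hY01 : ∀ ω, Y ω ∈ Set.Icc (0:ℝ) 1)
    (c τ : ℝ) (hc : 0 ≤ c) (hτ : τ ∈ Set.Ioc (0:ℝ) 1)
    (hsandwich : ∀ t : ℝ, (μ {ω | Y ω ≤ t}).toReal ≤ (μ {ω | X ω ≤ t}).toReal ∧
      (μ {ω | X ω ≤ t}).toReal ≤ (μ {ω | Y ω ≤ t + c}).toReal) :
    (∀ b ∈ Set.Icc (0:ℝ) 1,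
      0 ≤ (∫ ω, max (b - X ω) 0 ∂μ) - ∫ ω, max (b - Y ω) 0 ∂μ ∧
      (∫ ω, max (b - X ω) 0 ∂μ) - (∫ ω, max (b - Y ω) 0 ∂μ) ≤ c) ∧
    0 ≤ sSup ((fun b => b - τ⁻¹ * ∫ ω, max (b - Y ω) 0 ∂μ) '' Set.Icc (0:ℝ) 1)
        - sSup ((fun b => b - τ⁻¹ * ∫ ω, max (b - X ω) 0 ∂μ) '' Set.Icc (0:ℝ) 1) ∧
    sSup ((fun b => b - τ⁻¹ * ∫ ω, max (b - Y ω) 0 ∂μ) '' Set.Icc (0:ℝ) 1)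
        - sSup ((fun b => b - τ⁻¹ * ∫ ω, max (b - X ω) 0 ∂μ) '' Set.Icc (0:ℝ) 1) ≤ τ⁻¹ * c := by
  have hτ0 : 0 < τ := hτ.1
  have hτinv : 0 ≤ τ⁻¹ := by positivity
  set GX : ℝ → ℝ := fun b => ∫ ω, max (b - X ω) 0 ∂μ with hGX
  set GY : ℝ → ℝ := fun b => ∫ ω, max (b - Y ω) 0 ∂μ with hGY
  -- part 1
  have part1 : ∀ b ∈ Set.Icc (0:ℝ) 1, GY b ≤ GX b ∧ GX b ≤ GY b + c := by
    intro b hb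
    have hX0 : ∀ ω, 0 ≤ X ω := fun ω => (hX01 ω).1
    have hY0 : ∀ ω, 0 ≤ Y ω := fun ω => (hY01 ω).1
    have e1 : GX b = ∫ t in Set.Ioc 0 (1+c), (μ {ω | X ω ≤ b - t}).toReal :=
      layer_aux μ X hXmeas hX0 b (1+c) hb.1 (by linarith [hb.2])
    have e2 : GY b = ∫ t in Set.Ioc 0 (1+c), (μ {ω | Y ω ≤ b - t}).toReal :=
      layer_aux μ Y hYmeas hY0 b (1+c) hb.1 (by linarith [hb.2])
    have e3 : GY (b+c) = ∫ t in Set.Ioc 0 (1+c), (μ {ω | Y ω ≤ (b+c) - t}).toReal :=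
      layer_aux μ Y hYmeas hY0 (b+c) (1+c) (by linarith [hb.1]) (by linarith [hb.2])
    have i1 : GY b ≤ GX b := by
      rw [e1, e2]
      exact setIntegral_mono_on (cdf_intOn μ Y b (1+c)) (cdf_intOn μ X b (1+c))
        measurableSet_Ioc (fun t _ => (hsandwich (b - t)).1)
    have i2 : GX b ≤ GY (b+c) := by
      rw [e1, e3]
      refine setIntegral_mono_on (cdf_intOn μ X b (1+c)) (cdf_intOn μ Y (b+c) (1+c))
        measurableSet_Ioc (fun t _ => ?_)
      have := (hsandwich (b - t)).2
      simpa [show b - t + c = b + c - t by ring] using this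
    have i3 : GY (b+c) ≤ GY b + c := by
      have hintY : ∀ b' M : ℝ, 0 ≤ b' → b' ≤ M → Integrable (fun ω => max (b' - Y ω) 0) μ := by
        intro b' M h0 hM
        refine Integrable.mono' (integrable_const M)
          (((measurable_const.sub hYmeas).max measurable_const).aestronglyMeasurable)
          (Filter.Eventually.of_forall fun ω => ?_)
        rw [Real.norm_eq_abs, abs_of_nonneg (le_max_right _ _)]
        exact max_le (by have := hY0 ω; linarith) (by linarith)
      calc GY (b+c) ≤ ∫ ω, (max (b - Y ω) 0 + c) ∂μ := by
            refine integral_mono (hintY (b+c) (1+c) (by linarith [hb.1]) (by linarith [hb.2]))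
              ((hintY b 1 hb.1 hb.2).add (integrable_const c)) (fun ω => ?_)
            exact max_le (by have := le_max_left (b - Y ω) 0; linarith)
              (by have := le_max_right (b - Y ω) 0; linarith)
        _ = GY b + c := by
            rw [integral_add (hintY b 1 hb.1 hb.2) (integrable_const c), integral_const]
            simp
            rfl
    exact ⟨i1, i2.trans i3⟩
  have part1' : ∀ b ∈ Set.Icc (0:ℝ) 1,
      0 ≤ GX b - GY b ∧ GX b - GY b ≤ c := by
    intro b hb
    obtain ⟨h1, h2⟩ := part1 b hb
    exact ⟨by linarith, by linarith⟩
  -- part 2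
  have hGXnn : ∀ b, 0 ≤ GX b := fun b => integral_nonneg fun ω => le_max_right _ _
  have hGYnn : ∀ b, 0 ≤ GY b := fun b => integral_nonneg fun ω => le_max_right _ _
  set SX := (fun b => b - τ⁻¹ * GX b) '' Set.Icc (0:ℝ) 1 with hSX
  set SY := (fun b => b - τ⁻¹ * GY b) '' Set.Icc (0:ℝ) 1 with hSY
  have hne : (0:ℝ) ∈ Set.Icc (0:ℝ) 1 := ⟨le_refl 0, zero_le_one⟩
  have hSXne : SX.Nonempty := ⟨_, 0, hne, rfl⟩
  have hSYne : SY.Nonempty := ⟨_, 0, hne, rfl⟩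
  have hSXbdd : BddAbove SX := by
    refine ⟨1, fun x hx => ?_⟩
    obtain ⟨b, hb, rfl⟩ := hx
    have := mul_nonneg hτinv (hGXnn b)
    linarith [hb.2]
  have hSYbdd : BddAbove SY := by
    refine ⟨1, fun x hx => ?_⟩
    obtain ⟨b, hb, rfl⟩ := hx
    have := mul_nonneg hτinv (hGYnn b)
    linarith [hb.2]
  have hle : sSup SX ≤ sSup SY := by
    refine csSup_le hSXne fun x hx => ?_
    obtain ⟨b, hb, rfl⟩ := hx
    have h1 : b - τ⁻¹ * GX b ≤ b - τ⁻¹ * GY b := by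
      have := mul_le_mul_of_nonneg_left (part1 b hb).1 hτinv
      linarith
    exact h1.trans (le_csSup hSYbdd ⟨b, hb, rfl⟩)
  have hle2 : sSup SY ≤ sSup SX + τ⁻¹ * c := by
    refine csSup_le hSYne fun x hx => ?_
    obtain ⟨b, hb, rfl⟩ := hx
    have h1 : b - τ⁻¹ * GY b ≤ (b - τ⁻¹ * GX b) + τ⁻¹ * c := by
      have h2 : GX b - c ≤ GY b := by linarith [(part1 b hb).2]
      have := mul_le_mul_of_nonneg_left h2 hτinv
      have hd : τ⁻¹ * (GX b - c) = τ⁻¹ * GX b - τ⁻¹ * c := by ring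
      linarith [hd ▸ this]
    exact h1.trans (by linarith [le_csSup hSXbdd (⟨b, hb, rfl⟩ : (b - τ⁻¹ * GX b) ∈ SX)])
  exact ⟨part1', by constructor <;> linarith⟩
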